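/- Let n ∈ ℕ and 0 ≤ k with 2k < n, and let (x_k,…,x_{n−k}) be a symmetric Jordan chain in V(B(n)) with r(x_l) = l (so U_0(x_l) = x_{l+1} for k ≤ l < n−k and U_0(x_{n−k}) = 0). Identify V(B(n)) with the span V(0) in V(B(n+1)) of subsets not containing n+1, and let R : V(0) → V(B(n+1)), written R(v) = v̄, be the linear map induced by X ↦ X ∪ {n+1}. Define z_l = (n−k−l+1)·x̄_{l−1} − x_l for k+1 ≤ l ≤ n−k. Then, with U the up operator of V(B(n+1)): each z_l is nonzero of rank l, U(z_l) = z_{l+1} for k+1 ≤ l < n−k, and U(z_{n−k}) = 0; hence (z_{k+1},…,z_{n−k}) is a symmetric Jordan chain in V(B(n+1)). -/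

import Mathlib

/-- `V n` is the complex vector space with basis `B(n)`, the set of all
subsets of `[n] = {1, …, n}` (modeled as `Finset (Fin n)`). -/
abbrev V (n : ℕ) : Type := Finset (Fin n) →₀ ℂ

/-- `V(B(n)_k)`: the span of the `k`-subsets of `[n]`, i.e. the elements of
`V n` supported on subsets of cardinality `k`. -/
noncomputable def rankSubmodule (n k : ℕ) : Submodule ℂ (V n) :=
  Finsupp.supported ℂ ℂ {X : Finset (Fin n) | X.card = k}

/-- The up operator `U : V(B(n)) → V(B(n))`, defined on a basis element `X` by
`U(X) = Σ_Y Y`, the sum over all `Y ⊆ [n]` with `X ⊆ Y` and `|Y| = |X| + 1`. -/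
noncomputable def upMap (n : ℕ) : V n →ₗ[ℂ] V n :=
  Finsupp.lift (V n) ℂ (Finset (Fin n)) fun X =>
    ∑ Y ∈ Finset.univ.filter (fun Y : Finset (Fin n) => X ⊆ Y ∧ Y.card = X.card + 1),
      Finsupp.single Y (1 : ℂ)

/-- `IsSJC n k h v` : `(v 0, v 1, …, v (h-1))` is a symmetric Jordan chain in
`V(B(n))`: a sequence of `h ≥ 1` nonzero homogeneous elements, `v i` of rank
`k + i`, with `U (v i) = v (i+1)`, `U (v (h-1)) = 0`, and the symmetry condition
`r(v_1) + r(v_h) = n` (which for `h = 1` reads `2 r(v_1) = n`). -/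
def IsSJC (n k h : ℕ) (v : ℕ → V n) : Prop :=
  1 ≤ h ∧
  (∀ i < h, v i ≠ 0 ∧ v i ∈ rankSubmodule n (k + i)) ∧
  (∀ i, i + 1 < h → upMap n (v i) = v (i + 1)) ∧
  upMap n (v (h - 1)) = 0 ∧
  k + (k + (h - 1)) = n

/-- The inclusion `V(B(n)) ≃ V(0) ⊆ V(B(n+1))` induced by regarding a subset of
`[n]` as a subset of `[n+1]` not containing `n+1`. -/
noncomputable def inclMap (n : ℕ) : V n →ₗ[ℂ] V (n + 1) :=
  Finsupp.lmapDomain ℂ ℂ (fun X : Finset (Fin n) =>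
    X.map ⟨Fin.castSucc, Fin.castSucc_injective n⟩)

/-- The map `R : V(0) → V(B(n+1))`, `R(v) = v̄`, induced by
`X ↦ X ∪ {n+1}` for `X ⊆ [n]` (here `V(0) ≅ V(B(n))`). -/
noncomputable def barMap (n : ℕ) : V n →ₗ[ℂ] V (n + 1) :=
  Finsupp.lmapDomain ℂ ℂ (fun X : Finset (Fin n) =>
    insert (Fin.last n) (X.map ⟨Fin.castSucc, Fin.castSucc_injective n⟩))

section Aux
open Finset

-- the embedding
def cemb (n : ℕ) : Fin n ↪ Fin (n+1) := ⟨Fin.castSucc, Fin.castSucc_injective n⟩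

lemma last_not_mem_cmap {n : ℕ} (X : Finset (Fin n)) : Fin.last n ∉ X.map (cemb n) := by
  simp only [mem_map, not_exists]
  rintro a ⟨-, h⟩
  exact absurd h (Fin.castSucc_lt_last a).ne

lemma cmap_injective (n : ℕ) : Function.Injective (fun X : Finset (Fin n) => X.map (cemb n)) :=
  Finset.map_injective _

lemma bar_fun_injective (n : ℕ) :
    Function.Injective (fun X : Finset (Fin n) => insert (Fin.last n) (X.map (cemb n))) := by
  intro a b h
  apply cmap_injective n
  have ha := last_not_mem_cmap a
  have hb := last_not_mem_cmap b
  have h2 := congrArg (fun s => Finset.erase s (Fin.last n)) h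
  simp only [Finset.erase_insert ha, Finset.erase_insert hb] at h2
  exact h2

lemma exists_cmap {n : ℕ} (Z : Finset (Fin (n+1))) (h : Fin.last n ∉ Z) :
    ∃ W : Finset (Fin n), W.map (cemb n) = Z := by
  classical
  refine ⟨Z.preimage (cemb n) ((cemb n).injective.injOn), ?_⟩
  rw [Finset.map_eq_image, Finset.image_preimage]
  ext z
  simp only [mem_filter, and_iff_left_iff_imp]
  intro hz
  have : z ≠ Fin.last n := fun e => h (e ▸ hz)
  obtain ⟨w, rfl⟩ := Fin.exists_castSucc_eq.mpr this
  exact ⟨w, rfl⟩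

lemma incl_eq (n : ℕ) (v : V n) :
    inclMap n v = Finsupp.mapDomain (fun X : Finset (Fin n) => X.map (cemb n)) v := rfl

lemma bar_eq (n : ℕ) (v : V n) :
    barMap n v = Finsupp.mapDomain
      (fun X : Finset (Fin n) => insert (Fin.last n) (X.map (cemb n))) v := rfl

lemma upMap_single (n : ℕ) (X : Finset (Fin n)) :
    upMap n (Finsupp.single X (1:ℂ)) =
      ∑ Y ∈ Finset.univ.filter (fun Y : Finset (Fin n) => X ⊆ Y ∧ Y.card = X.card + 1),
        Finsupp.single Y (1 : ℂ) := by
  rw [upMap, Finsupp.lift_apply, Finsupp.sum_single_index] <;> simp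

lemma filterA (n : ℕ) (X : Finset (Fin n)) :
    Finset.univ.filter (fun Z : Finset (Fin (n+1)) =>
        X.map (cemb n) ⊆ Z ∧ Z.card = (X.map (cemb n)).card + 1)
    = (Finset.univ.filter (fun Y : Finset (Fin n) => X ⊆ Y ∧ Y.card = X.card + 1)).image
        (fun Y => Y.map (cemb n))
      ∪ {insert (Fin.last n) (X.map (cemb n))} := by
  ext Z
  simp only [mem_filter, mem_union, mem_image, mem_singleton, mem_univ, true_and,
    Finset.card_map]
  constructor
  · rintro ⟨hsub, hcard⟩
    by_cases hl : Fin.last n ∈ Z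
    · right
      have h1 : X.map (cemb n) ⊆ Z.erase (Fin.last n) :=
        subset_erase.mpr ⟨hsub, last_not_mem_cmap X⟩
      have h2 : (Z.erase (Fin.last n)).card = X.card := by
        rw [Finset.card_erase_of_mem hl, hcard]; simp
      have := Finset.eq_of_subset_of_card_le h1 (by rw [h2, Finset.card_map])
      rw [this, Finset.insert_erase hl]
    · left
      obtain ⟨W, rfl⟩ := exists_cmap Z hl
      refine ⟨W, ⟨?_, ?_⟩, rfl⟩
      · exact (Finset.map_subset_map).mp hsub
      · rw [Finset.card_map] at hcard; exact hcard
  · rintro (⟨Y, ⟨hXY, hY⟩, rfl⟩ | rfl)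
    · exact ⟨Finset.map_subset_map.mpr hXY, by rw [Finset.card_map, hY]⟩
    · exact ⟨Finset.subset_insert _ _,
        by rw [Finset.card_insert_of_notMem (last_not_mem_cmap X), Finset.card_map]⟩

lemma filterB (n : ℕ) (X : Finset (Fin n)) :
    Finset.univ.filter (fun Z : Finset (Fin (n+1)) =>
        insert (Fin.last n) (X.map (cemb n)) ⊆ Z ∧
        Z.card = (insert (Fin.last n) (X.map (cemb n))).card + 1)
    = (Finset.univ.filter (fun Y : Finset (Fin n) => X ⊆ Y ∧ Y.card = X.card + 1)).image
        (fun Y => insert (Fin.last n) (Y.map (cemb n))) := by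
  have hcX : (insert (Fin.last n) (X.map (cemb n))).card = X.card + 1 := by
    rw [Finset.card_insert_of_notMem (last_not_mem_cmap X), Finset.card_map]
  ext Z
  simp only [mem_filter, mem_image, mem_univ, true_and, hcX]
  constructor
  · rintro ⟨hsub, hcard⟩
    have hl : Fin.last n ∈ Z := hsub (Finset.mem_insert_self _ _)
    have hl' : Fin.last n ∉ Z.erase (Fin.last n) := Finset.notMem_erase _ _
    obtain ⟨W, hW⟩ := exists_cmap (Z.erase (Fin.last n)) hl'
    refine ⟨W, ⟨?_, ?_⟩, ?_⟩
    · apply (Finset.map_subset_map (f := cemb n)).mp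
      rw [hW]
      exact subset_erase.mpr ⟨(Finset.insert_subset_iff.mp hsub).2, last_not_mem_cmap X⟩
    · have : (Z.erase (Fin.last n)).card = X.card + 1 := by
        rw [Finset.card_erase_of_mem hl, hcard]; simp
      rw [← Finset.card_map (cemb n), hW, this]
    · rw [hW, Finset.insert_erase hl]
  · rintro ⟨Y, ⟨hXY, hY⟩, rfl⟩
    constructor
    · apply Finset.insert_subset_insert
      exact Finset.map_subset_map.mpr hXY
    · rw [Finset.card_insert_of_notMem (last_not_mem_cmap Y), Finset.card_map, hY]

lemma up_incl_single (n : ℕ) (X : Finset (Fin n)) :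
    upMap (n+1) (inclMap n (Finsupp.single X (1:ℂ))) =
      inclMap n (upMap n (Finsupp.single X 1)) + barMap n (Finsupp.single X 1) := by
  rw [incl_eq, Finsupp.mapDomain_single, upMap_single, filterA, Finset.sum_union, upMap_single,
    map_sum]
  · congr 1
    · rw [Finset.sum_image (fun a _ b _ h => cmap_injective n h)]
      exact Finset.sum_congr rfl fun Y _ => by rw [incl_eq, Finsupp.mapDomain_single]
    · rw [Finset.sum_singleton, bar_eq, Finsupp.mapDomain_single]
  · rw [Finset.disjoint_singleton_right]
    simp only [mem_image, not_exists]
    rintro Y ⟨-, h⟩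
    exact last_not_mem_cmap Y (h ▸ Finset.mem_insert_self _ _)

lemma up_bar_single (n : ℕ) (X : Finset (Fin n)) :
    upMap (n+1) (barMap n (Finsupp.single X (1:ℂ))) =
      barMap n (upMap n (Finsupp.single X 1)) := by
  rw [bar_eq, Finsupp.mapDomain_single, upMap_single, filterB, upMap_single, map_sum,
    Finset.sum_image (fun a _ b _ h => bar_fun_injective n h)]
  exact Finset.sum_congr rfl fun Y _ => by rw [bar_eq, Finsupp.mapDomain_single]

lemma up_incl (n : ℕ) (v : V n) :
    upMap (n+1) (inclMap n v) = inclMap n (upMap n v) + barMap n v := by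
  have h : (upMap (n+1)).comp (inclMap n) = (inclMap n).comp (upMap n) + barMap n := by
    apply Finsupp.lhom_ext
    intro a b
    have hb : (Finsupp.single a b : V n) = b • Finsupp.single a 1 := by
      rw [Finsupp.smul_single, smul_eq_mul, mul_one]
    simp only [LinearMap.comp_apply, LinearMap.add_apply, hb, map_smul]
    rw [up_incl_single, smul_add]
  exact LinearMap.congr_fun h v

lemma up_bar (n : ℕ) (v : V n) :
    upMap (n+1) (barMap n v) = barMap n (upMap n v) := by
  have h : (upMap (n+1)).comp (barMap n) = (barMap n).comp (upMap n) := by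
    apply Finsupp.lhom_ext
    intro a b
    have hb : (Finsupp.single a b : V n) = b • Finsupp.single a 1 := by
      rw [Finsupp.smul_single, smul_eq_mul, mul_one]
    simp only [LinearMap.comp_apply, hb, map_smul]
    rw [up_bar_single]
  exact LinearMap.congr_fun h v

lemma incl_rank (n m : ℕ) (v : V n) (hv : v ∈ rankSubmodule n m) :
    inclMap n v ∈ rankSubmodule (n+1) m := by
  classical
  rw [rankSubmodule, Finsupp.mem_supported] at hv ⊢
  intro Z hZ
  rw [Finset.mem_coe] at hZ
  have := Finsupp.mapDomain_support (f := fun X : Finset (Fin n) => X.map (cemb n)) (s := v) hZ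
  rw [Finset.mem_image] at this
  obtain ⟨Y, hY, rfl⟩ := this
  simpa [Finset.card_map] using hv hY

lemma bar_rank (n m : ℕ) (v : V n) (hv : v ∈ rankSubmodule n m) :
    barMap n v ∈ rankSubmodule (n+1) (m+1) := by
  classical
  rw [rankSubmodule, Finsupp.mem_supported] at hv ⊢
  intro Z hZ
  rw [Finset.mem_coe] at hZ
  have := Finsupp.mapDomain_support
    (f := fun X : Finset (Fin n) => insert (Fin.last n) (X.map (cemb n))) (s := v) hZ
  rw [Finset.mem_image] at this
  obtain ⟨Y, hY, rfl⟩ := this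
  have := hv hY
  simp only [Set.mem_setOf_eq] at this ⊢
  rw [Finset.card_insert_of_notMem (last_not_mem_cmap Y), Finset.card_map, this]

lemma bar_apply_nolast (n : ℕ) (v : V n) (Z : Finset (Fin (n+1))) (hZ : Fin.last n ∉ Z) :
    barMap n v Z = 0 := by
  classical
  by_contra h
  have hZ' : Z ∈ (barMap n v).support := Finsupp.mem_support_iff.mpr h
  have := Finsupp.mapDomain_support
    (f := fun X : Finset (Fin n) => insert (Fin.last n) (X.map (cemb n))) (s := v) hZ'
  rw [Finset.mem_image] at this
  obtain ⟨Y, -, rfl⟩ := this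
  exact hZ (Finset.mem_insert_self _ _)

lemma z_ne_zero (n : ℕ) (c : ℂ) (w v : V n) (hv : v ≠ 0) :
    c • barMap n w - inclMap n v ≠ 0 := by
  obtain ⟨X, hX⟩ := Finsupp.support_nonempty_iff.mpr hv
  intro h
  have := congrArg (fun f : V (n+1) => f (X.map (cemb n))) h
  simp only [Finsupp.coe_sub, Finsupp.coe_smul, Pi.sub_apply, Pi.smul_apply,
    Finsupp.coe_zero, Pi.zero_apply] at this
  rw [bar_apply_nolast n w _ (last_not_mem_cmap X), incl_eq,
    Finsupp.mapDomain_apply (cmap_injective n)] at this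
  simp only [smul_zero, zero_sub, neg_eq_zero] at this
  exact Finsupp.mem_support_iff.mp hX this

end Aux
open Finset

/-- **Theorem.** Let `2k < n` and `(x_k, …, x_{n−k})` be a symmetric Jordan chain in
`V(B(n))` with `r(x_l) = l`. Set `z_l = (n−k−l+1)·x̄_{l−1} − x_l` for `k+1 ≤ l ≤ n−k`.
Then each `z_l` is nonzero of rank `l`, `U(z_l) = z_{l+1}` for `k+1 ≤ l < n−k`, and
`U(z_{n−k}) = 0`; hence `(z_{k+1}, …, z_{n−k})` is an SJC in `V(B(n+1))`. -/
theorem z_chain_is_sjc (n k : ℕ) (hk : 2 * k < n) (x : ℕ → V n)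
    (hne : ∀ l, k ≤ l → l ≤ n - k → x l ≠ 0)
    (hrank : ∀ l, k ≤ l → l ≤ n - k → x l ∈ rankSubmodule n l)
    (hup : ∀ l, k ≤ l → l < n - k → upMap n (x l) = x (l + 1))
    (htop : upMap n (x (n - k)) = 0)
    (z : ℕ → V (n + 1))
    (hz : ∀ l, k + 1 ≤ l → l ≤ n - k →
      z l = ((n - k - l + 1 : ℕ) : ℂ) • barMap n (x (l - 1)) - inclMap n (x l)) :
    (∀ l, k + 1 ≤ l → l ≤ n - k → z l ≠ 0 ∧ z l ∈ rankSubmodule (n + 1) l) ∧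
    (∀ l, k + 1 ≤ l → l < n - k → upMap (n + 1) (z l) = z (l + 1)) ∧
    upMap (n + 1) (z (n - k)) = 0 ∧
    IsSJC (n + 1) (k + 1) (n - 2 * k) (fun i => z (k + 1 + i)) := by
  have hkn : k + 1 ≤ n - k := by omega
  have P1 : ∀ l, k + 1 ≤ l → l ≤ n - k → z l ≠ 0 ∧ z l ∈ rankSubmodule (n + 1) l := by
    intro l h1 h2
    rw [hz l h1 h2]
    constructor
    · exact z_ne_zero n _ _ _ (hne l (by omega) h2)
    · refine Submodule.sub_mem _ (Submodule.smul_mem _ _ ?_)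
        (incl_rank n l _ (hrank l (by omega) h2))
      have hb := bar_rank n (l - 1) _ (hrank (l - 1) (by omega) (by omega))
      rwa [show l - 1 + 1 = l from by omega] at hb
  have P2 : ∀ l, k + 1 ≤ l → l < n - k → upMap (n + 1) (z l) = z (l + 1) := by
    intro l h1 h2
    rw [hz l h1 (le_of_lt h2), hz (l + 1) (by omega) (by omega)]
    rw [map_sub, map_smul, up_bar, up_incl]
    have e1 : upMap n (x (l - 1)) = x l := by
      have h := hup (l - 1) (by omega) (by omega)
      rwa [show l - 1 + 1 = l from by omega] at h
    rw [e1, hup l (by omega) h2]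
    have hc : ((n - k - l + 1 : ℕ) : ℂ) = ((n - k - (l + 1) + 1 : ℕ) : ℂ) + 1 := by
      rw [show n - k - l + 1 = (n - k - (l + 1) + 1) + 1 from by omega]
      push_cast; ring
    rw [hc, show l + 1 - 1 = l from rfl, add_smul, one_smul]
    abel
  have P3 : upMap (n + 1) (z (n - k)) = 0 := by
    rw [hz (n - k) hkn le_rfl, map_sub, map_smul, up_bar, up_incl, htop]
    have e1 : upMap n (x (n - k - 1)) = x (n - k) := by
      have h := hup (n - k - 1) (by omega) (by omega)
      rwa [show n - k - 1 + 1 = n - k from by omega] at h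
    rw [e1, show n - k - (n - k) + 1 = 1 from by omega]
    simp
  refine ⟨P1, P2, P3, by omega, ?_, ?_, ?_, by omega⟩
  · intro i hi
    exact P1 (k + 1 + i) (by omega) (by omega)
  · intro i hi
    exact P2 (k + 1 + i) (by omega) (by omega)
  · show upMap (n + 1) (z (k + 1 + (n - 2 * k - 1))) = 0
    rw [show k + 1 + (n - 2 * k - 1) = n - k from by omega]
    exact P3
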